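/- Fix w^r ∈ {0,1}^{Nξ} and a finite set Ξ̂ ⊆ Ξ, and let v denote the optimal value of the relaxed linear program: inf over θ ∈ ℝ, ψ ∈ ℝ^{Ng} with ψ ≥ 0, x ∈ X^{LP}, w, and y(ξ) ∈ Y^{LP} for ξ ∈ Ξ̂, subject to w = w^r and, for every ξ ∈ Ξ̂: θ ≥ cᵀψ + ξᵀC x + ξᵀD w + ξᵀQ y(ξ) − ψᵀ g(ξ) and T(ξ)x + V(ξ)w + W(ξ)y(ξ) ≤ Hξ, where X^{LP} and Y^{LP} are the continuous relaxations of X and Y. Then v ≤ Φ(w^r), where Φ(w^r) = inf over ψ ≥ 0, x ∈ X, y^k ∈ Y (k = 1..K) of cᵀψ + sup_{ξ̄ ∈ Ξ} min_{k=1..K} { sup_{ξ ∈ Ξ(w^r, ξ̄)} ( ξᵀC x + ξᵀD w^r + ξᵀQ y^k − ψᵀ g(ξ) ) subject to T(ξ)x + V(ξ)w^r + W(ξ)y^k ≤ Hξ for all ξ ∈ Ξ(w^r, ξ̄), the k-th inner value being +∞ if this robust feasibility fails }. -/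

import Mathlib

open Matrix

noncomputable section

/-- The information set `Ξ(w, ξ̄) = {ξ ∈ Ξ : w ∘ ξ = w ∘ ξ̄}`. -/
def obsSet {n : ℕ} (Ξ : Set (Fin n → ℝ)) (w ξb : Fin n → ℝ) : Set (Fin n → ℝ) :=
  {ξ ∈ Ξ | w * ξ = w * ξb}

/-- The convex piecewise linear function `g` with `g_s(ξ) = max_{t} g_{st}ᵀ ξ`. -/
def gfun {Nξ Ng T : ℕ} (gst : Fin Ng → Fin T → (Fin Nξ → ℝ)) (ξ : Fin Nξ → ℝ) :
    Fin Ng → ℝ :=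
  fun s => ⨆ t : Fin T, gst s t ⬝ᵥ ξ

/-- The `l`-th uncertain constraint row `[T(ξ)x + V(ξ)w + W(ξ)y]_l`. -/
def rowLHS {Nξ Nx Ny L : ℕ} (Tm : Fin L → Matrix (Fin Nξ) (Fin Nx) ℝ)
    (Vm : Fin L → Matrix (Fin Nξ) (Fin Nξ) ℝ) (Wm : Fin L → Matrix (Fin Nξ) (Fin Ny) ℝ)
    (x : Fin Nx → ℝ) (w : Fin Nξ → ℝ) (y : Fin Ny → ℝ) (ξ : Fin Nξ → ℝ) (l : Fin L) : ℝ :=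
  ξ ⬝ᵥ (Tm l).mulVec x + ξ ⬝ᵥ (Vm l).mulVec w + ξ ⬝ᵥ (Wm l).mulVec y

/-- the optimal value of the relaxed (scenario-based, fully adaptive,
continuously relaxed) linear program lower-bounds the value `Φ(w^r)` of the K-adaptability
problem with the measurement decision fixed to `w^r`. -/
theorem stmt18 (Nξ Nx Ny Ng L R T K : ℕ) (hT : 0 < T) (hK : 0 < K)
    (A : Matrix (Fin R) (Fin Nξ) ℝ) (b : Fin R → ℝ)
    (Ξ : Set (Fin Nξ → ℝ)) (hΞ : Ξ = {ξ | A.mulVec ξ ≤ b})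
    (hΞne : Ξ.Nonempty) (hΞbdd : Bornology.IsBounded Ξ)
    (Xset XLP : Set (Fin Nx → ℝ)) (Yset YLP : Set (Fin Ny → ℝ))
    (hXLP : Xset ⊆ XLP) (hXLPconv : Convex ℝ XLP)
    (hYLP : Yset ⊆ YLP) (hYLPconv : Convex ℝ YLP)
    (C : Matrix (Fin Nξ) (Fin Nx) ℝ) (D : Matrix (Fin Nξ) (Fin Nξ) ℝ)
    (Q : Matrix (Fin Nξ) (Fin Ny) ℝ) (H : Matrix (Fin L) (Fin Nξ) ℝ)
    (Tm : Fin L → Matrix (Fin Nξ) (Fin Nx) ℝ)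
    (Vm : Fin L → Matrix (Fin Nξ) (Fin Nξ) ℝ)
    (Wm : Fin L → Matrix (Fin Nξ) (Fin Ny) ℝ)
    (gst : Fin Ng → Fin T → (Fin Nξ → ℝ)) (c : Fin Ng → ℝ)
    (wr : Fin Nξ → ℝ) (hwr : ∀ i, wr i = 0 ∨ wr i = 1)
    (Ξhat : Set (Fin Nξ → ℝ)) (hΞhatfin : Ξhat.Finite) (hΞhat : Ξhat ⊆ Ξ) :
    -- v : optimal value of the relaxed linear program
    sInf {v : EReal |
      ∃ (θ : ℝ) (ψ : Fin Ng → ℝ) (x : Fin Nx → ℝ) (w : Fin Nξ → ℝ)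
        (y : (Fin Nξ → ℝ) → (Fin Ny → ℝ)),
        0 ≤ ψ ∧ x ∈ XLP ∧ (∀ ξ ∈ Ξhat, y ξ ∈ YLP) ∧
        w = wr ∧
        (∀ ξ ∈ Ξhat,
          c ⬝ᵥ ψ + ξ ⬝ᵥ C.mulVec x + ξ ⬝ᵥ D.mulVec w + ξ ⬝ᵥ Q.mulVec (y ξ)
            - ψ ⬝ᵥ gfun gst ξ ≤ θ) ∧
        (∀ ξ ∈ Ξhat, ∀ l, rowLHS Tm Vm Wm x w (y ξ) ξ l ≤ H.mulVec ξ l) ∧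
        v = ((θ : ℝ) : EReal)}
    ≤
    -- Φ(w^r)
    sInf {v : EReal |
      ∃ (ψ : Fin Ng → ℝ) (x : Fin Nx → ℝ) (y : Fin K → Fin Ny → ℝ),
        0 ≤ ψ ∧ x ∈ Xset ∧ (∀ k, y k ∈ Yset) ∧
        v = ((c ⬝ᵥ ψ : ℝ) : EReal) +
          ⨆ ξb ∈ Ξ, ⨅ (k : Fin K)
              (_ : ∀ ξ ∈ obsSet Ξ wr ξb, ∀ l,
                rowLHS Tm Vm Wm x wr (y k) ξ l ≤ H.mulVec ξ l),
            ⨆ ξ ∈ obsSet Ξ wr ξb,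
              ((ξ ⬝ᵥ C.mulVec x + ξ ⬝ᵥ D.mulVec wr + ξ ⬝ᵥ Q.mulVec (y k)
                - ψ ⬝ᵥ gfun gst ξ : ℝ) : EReal)} := by
  classical
  haveI : Nonempty (Fin K) := ⟨⟨0, hK⟩⟩
  apply le_sInf
  rintro v ⟨ψ, x, y, hψ, hx, hy, rfl⟩
  set val : (Fin Nξ → ℝ) → Fin K → ℝ := fun ξ k =>
    ξ ⬝ᵥ C.mulVec x + ξ ⬝ᵥ D.mulVec wr + ξ ⬝ᵥ Q.mulVec (y k) - ψ ⬝ᵥ gfun gst ξ with hval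
  set P : (Fin Nξ → ℝ) → Fin K → Prop := fun ξb k =>
    ∀ ξ ∈ obsSet Ξ wr ξb, ∀ l, rowLHS Tm Vm Wm x wr (y k) ξ l ≤ H.mulVec ξ l with hP
  set E : (Fin Nξ → ℝ) → Fin K → EReal := fun ξb k =>
    ⨆ ξ ∈ obsSet Ξ wr ξb, ((val ξ k : ℝ) : EReal) with hE
  set S : EReal := ⨆ ξb ∈ Ξ, ⨅ (k : Fin K) (_ : P ξb k), E ξb k with hSdef
  by_cases htop : ((c ⬝ᵥ ψ : ℝ) : EReal) + S = ⊤
  · rw [htop]; exact le_top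
  -- S ≠ ⊤
  have hStop : S ≠ ⊤ := by
    intro h
    exact htop (by rw [h]; exact EReal.add_top_of_ne_bot (EReal.coe_ne_bot _))
  have hself : ∀ ξb ∈ Ξ, ξb ∈ obsSet Ξ wr ξb := fun ξb h => ⟨h, rfl⟩
  -- lower bound: v ≠ ⊥
  obtain ⟨ξ0, hξ0⟩ := hΞne
  set m : ℝ := Finset.univ.inf' (Finset.univ_nonempty) (fun k => val ξ0 k) with hm
  have hmS : ((m : ℝ) : EReal) ≤ S := by
    refine le_trans ?_ (le_biSup (f := fun ξb => ⨅ (k : Fin K) (_ : P ξb k), E ξb k) hξ0)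
    refine le_iInf fun k => le_iInf fun _ => ?_
    refine le_trans (b := E ξ0 k) ?_ le_rfl
    refine le_trans ?_ (le_biSup (f := fun ξ => ((val ξ k : ℝ) : EReal)) (hself ξ0 hξ0))
    exact EReal.coe_le_coe_iff.2 (Finset.inf'_le _ (Finset.mem_univ k))
  have hbot : ((c ⬝ᵥ ψ : ℝ) : EReal) + S ≠ ⊥ := by
    intro h
    have : ((c ⬝ᵥ ψ + m : ℝ) : EReal) ≤ ⊥ := by
      rw [← h, EReal.coe_add]
      exact add_le_add_right hmS _
    exact absurd this (by simp [EReal.bot_lt_coe])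
  set θ₀ : ℝ := (((c ⬝ᵥ ψ : ℝ) : EReal) + S).toReal with hθ₀
  have hv : ((θ₀ : ℝ) : EReal) = ((c ⬝ᵥ ψ : ℝ) : EReal) + S := EReal.coe_toReal htop hbot
  -- key claim
  have key : ∀ ξh ∈ Ξhat, ∃ k : Fin K, P ξh k ∧
      c ⬝ᵥ ψ + val ξh k ≤ θ₀ := by
    intro ξh hξh
    have hξhΞ : ξh ∈ Ξ := hΞhat hξh
    obtain ⟨k₀, hk₀⟩ := Finite.exists_min (fun k => ⨅ (_ : P ξh k), E ξh k)
    have hterm : (⨅ (k : Fin K) (_ : P ξh k), E ξh k) ≤ S :=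
      le_biSup (f := fun ξb => ⨅ (k : Fin K) (_ : P ξb k), E ξb k) hξhΞ
    have hk₀eq : (⨅ (_ : P ξh k₀), E ξh k₀) = ⨅ (k : Fin K) (_ : P ξh k), E ξh k :=
      le_antisymm (le_iInf hk₀) (iInf_le _ _)
    have hk₀S : (⨅ (_ : P ξh k₀), E ξh k₀) ≤ S := hk₀eq ▸ hterm
    have hPk₀ : P ξh k₀ := by
      by_contra hnP
      rw [iInf_neg hnP] at hk₀S
      exact hStop (top_le_iff.1 hk₀S)
    refine ⟨k₀, hPk₀, ?_⟩
    have hES : E ξh k₀ ≤ S := by rwa [iInf_pos hPk₀] at hk₀S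
    have hvE : ((val ξh k₀ : ℝ) : EReal) ≤ E ξh k₀ :=
      le_biSup (f := fun ξ => ((val ξ k₀ : ℝ) : EReal)) (hself ξh hξhΞ)
    have : ((c ⬝ᵥ ψ + val ξh k₀ : ℝ) : EReal) ≤ ((θ₀ : ℝ) : EReal) := by
      rw [hv, EReal.coe_add]
      exact add_le_add_right (le_trans hvE hES) _
    exact EReal.coe_le_coe_iff.1 this
  set kch : (Fin Nξ → ℝ) → Fin K := fun ξh =>
    if h : ξh ∈ Ξhat then (key ξh h).choose else ⟨0, hK⟩ with hkch
  rw [← hv]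
  refine sInf_le ⟨θ₀, ψ, x, wr, fun ξh => y (kch ξh), hψ, hXLP hx,
    fun ξ _ => hYLP (hy _), rfl, ?_, ?_, rfl⟩
  · intro ξh hξh
    have h1 := (key ξh hξh).choose_spec.2
    simpa [hkch, dif_pos hξh, hval, add_sub_assoc, add_assoc] using h1
  · intro ξh hξh l
    have h1 := (key ξh hξh).choose_spec.1 ξh (hself ξh (hΞhat hξh)) l
    simpa [hkch, dif_pos hξh] using h1

end
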